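/- arXiv:1911.05822 — 2 statements merged into one kernel-verified Lean document; each statement's English description precedes it below -/
import Mathlib

section
/- Let κ > 0, let H be standard Gaussian and S = GY with G standard Gaussian and Y ∈ {±1} (so that ρS + √(1−ρ²)H has strictly positive density on ℝ for every ρ ∈ [−1,1]), and define η(q, ρ) = E[(ρ S + H√(1 − ρ²) − 1/q)_−²] − (1 − ρ²)κ for q > 0, ρ ∈ [−1, 1]. Then the function η̄(q) = min_{−1 ≤ ρ ≤ 1} η(q, ρ) is strictly decreasing on (0, ∞). -/
open MeasureTheory ProbabilityTheory Filter Set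

/-- The negative part `(x)₋ = min x 0`. -/
noncomputable def negp (x : ℝ) : ℝ := min x 0

/-- The standard Gaussian measure on `ℝ`. -/
noncomputable def stdGaussian : Measure ℝ := gaussianReal 0 1


open Real in
lemma gauss_sq_integrable : Integrable (fun x : ℝ => x ^ 2) stdGaussian := by
  rw [_root_.stdGaussian, gaussianReal_of_var_ne_zero 0 one_ne_zero,
    integrable_withDensity_iff (measurable_gaussianPDF 0 1)
      (ae_of_all _ fun x => ENNReal.ofReal_lt_top)]
  simp only [gaussianPDF, ENNReal.toReal_ofReal (gaussianPDFReal_nonneg _ _ _)]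
  have h := (integrable_rpow_mul_exp_neg_mul_sq (b := 2⁻¹) (by norm_num) (s := 2)
    (by norm_num)).const_mul (Real.sqrt (2 * π * 1))⁻¹
  refine h.congr (ae_of_all _ fun x => ?_)
  simp only [gaussianPDFReal]
  rw [show ((2:ℝ):ℝ) = ((2:ℕ):ℝ) by norm_num, Real.rpow_natCast]
  push_cast
  ring_nf

lemma stdGaussian_Ioo_pos {a b : ℝ} (hab : a < b) : 0 < stdGaussian (Set.Ioo a b) := by
  rw [_root_.stdGaussian, gaussianReal_apply 0 one_ne_zero, pos_iff_ne_zero]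
  intro h
  rw [lintegral_eq_zero_iff (measurable_gaussianPDF 0 1)] at h
  rw [Filter.EventuallyEq, ae_iff] at h
  simp only [Pi.zero_apply] at h
  have h2 : {x | ¬ gaussianPDF 0 1 x = 0} = Set.univ := by
    ext x
    simp [(gaussianPDF_pos 0 one_ne_zero x).ne']
  rw [h2, Measure.restrict_apply_univ, Real.volume_Ioo] at h
  exact (ENNReal.ofReal_pos.mpr (by linarith)).ne' h

lemma negp_abs_le (z : ℝ) : |negp z| ≤ |z| := by
  unfold negp
  rcases le_or_gt z 0 with h | h
  · rw [min_eq_left h]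
  · rw [min_eq_right h.le]
    simp [abs_nonneg]

lemma negp_nonpos (z : ℝ) : negp z ≤ 0 := min_le_right _ _

lemma continuous_negp : Continuous negp := continuous_id.min continuous_const

/-- with `H` standard Gaussian, `S = GY` (`G` standard Gaussian, `Y ∈ {±1}`)
independent of `H`, such that `ρS + √(1−ρ²)H` has a strictly positive density on `ℝ` for every
`ρ ∈ [−1,1]`, the function `η̄(q) = min_{ρ∈[−1,1]} η(q, ρ)` is strictly decreasing on
`(0, ∞)`, where `η(q, ρ) = E[(ρS + H√(1−ρ²) − 1/q)₋²] − (1−ρ²)κ`. -/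
theorem etabar_strictAnti
    {Ω : Type*} [MeasurableSpace Ω] (P : Measure Ω) [IsProbabilityMeasure P]
    (κ : ℝ) (hκ : 0 < κ)
    (H G Y : Ω → ℝ)
    (hHm : Measurable H) (hGm : Measurable G) (hYm : Measurable Y)
    (hY : ∀ ω, Y ω = 1 ∨ Y ω = -1)
    (hH : Measure.map H P = _root_.stdGaussian) (hG : Measure.map G P = _root_.stdGaussian)
    (S : Ω → ℝ) (hS : S = fun ω => G ω * Y ω)
    (hindep : IndepFun S H P)
    (hdens : ∀ ρ ∈ Set.Icc (-1 : ℝ) 1, ∃ f : ℝ → ℝ, (∀ x, 0 < f x) ∧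
      Measure.map (fun ω => ρ * S ω + Real.sqrt (1 - ρ ^ 2) * H ω) P
        = (volume : Measure ℝ).withDensity fun x => ENNReal.ofReal (f x)) :
    StrictAntiOn (fun q : ℝ =>
        ⨅ ρ : Set.Icc (-1 : ℝ) 1,
          ((∫ ω, (negp ((ρ : ℝ) * S ω + Real.sqrt (1 - (ρ : ℝ) ^ 2) * H ω - 1 / q)) ^ 2 ∂P)
            - (1 - (ρ : ℝ) ^ 2) * κ))
      (Set.Ioi 0) := by
  clear hdens
  haveI hne : Nonempty ↑(Icc (-1 : ℝ) 1) := ⟨⟨0, by norm_num⟩⟩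
  have hSm : Measurable S := hS ▸ hGm.mul hYm
  set X : ℝ → Ω → ℝ := fun ρ ω => ρ * S ω + Real.sqrt (1 - ρ ^ 2) * H ω with hX
  have hXm : ∀ ρ, Measurable (X ρ) :=
    fun ρ => ((hSm.const_mul ρ).add (hHm.const_mul _))
  have hYabs : ∀ ω, |Y ω| = 1 := by
    intro ω; rcases hY ω with h | h <;> simp [h]
  have hSabs : ∀ ω, |S ω| = |G ω| := by
    intro ω; rw [hS]; simp [abs_mul, hYabs ω]
  -- square integrability
  have hH2 : Integrable (fun ω => H ω ^ 2) P := by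
    have h : Integrable (fun x : ℝ => x ^ 2) (Measure.map H P) := hH ▸ gauss_sq_integrable
    rwa [integrable_map_measure (continuous_pow 2).measurable.aestronglyMeasurable
      hHm.aemeasurable] at h
  have hG2 : Integrable (fun ω => G ω ^ 2) P := by
    have h : Integrable (fun x : ℝ => x ^ 2) (Measure.map G P) := hG ▸ gauss_sq_integrable
    rwa [integrable_map_measure (continuous_pow 2).measurable.aestronglyMeasurable
      hGm.aemeasurable] at h
  have hS2 : Integrable (fun ω => S ω ^ 2) P := by
    refine hG2.congr (ae_of_all _ fun ω => ?_)
    show G ω ^ 2 = S ω ^ 2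
    rw [← sq_abs (G ω), ← hSabs ω, sq_abs]
  have mS : MemLp S 2 P := (memLp_two_iff_integrable_sq hSm.aestronglyMeasurable).mpr hS2
  have mH : MemLp H 2 P := (memLp_two_iff_integrable_sq hHm.aestronglyMeasurable).mpr hH2
  -- the dominating bound for |ρ| ≤ 2
  have hBint : ∀ c : ℝ, Integrable (fun ω => (2 * |S ω| + |H ω| + |c|) ^ 2) P := by
    intro c
    exact (((mS.abs.const_mul 2).add mH.abs).add (memLp_const |c|)).integrable_sq
  have hsqrt_le : ∀ ρ : ℝ, Real.sqrt (1 - ρ ^ 2) ≤ 1 := by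
    intro ρ
    exact Real.sqrt_le_one.mpr (by nlinarith [sq_nonneg ρ])
  have hbd : ∀ (c ρ : ℝ), |ρ| ≤ 2 → ∀ ω,
      ‖negp (X ρ ω - c) ^ 2‖ ≤ (2 * |S ω| + |H ω| + |c|) ^ 2 := by
    intro c ρ hρ ω
    have h1 : |X ρ ω - c| ≤ 2 * |S ω| + |H ω| + |c| := by
      have : |X ρ ω - c| ≤ |ρ| * |S ω| + Real.sqrt (1 - ρ ^ 2) * |H ω| + |c| := by
        calc |X ρ ω - c| ≤ |X ρ ω| + |c| := abs_sub _ _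
          _ ≤ |ρ * S ω| + |Real.sqrt (1 - ρ ^ 2) * H ω| + |c| := by
              gcongr; exact abs_add_le _ _
          _ = |ρ| * |S ω| + Real.sqrt (1 - ρ ^ 2) * |H ω| + |c| := by
              rw [abs_mul, abs_mul, abs_of_nonneg (Real.sqrt_nonneg _)]
      have h2 : Real.sqrt (1 - ρ ^ 2) * |H ω| ≤ 1 * |H ω| :=
        mul_le_mul_of_nonneg_right (hsqrt_le ρ) (abs_nonneg _)
      nlinarith [abs_nonneg (S ω), abs_nonneg (H ω)]
    calc ‖negp (X ρ ω - c) ^ 2‖ = |negp (X ρ ω - c)| ^ 2 := by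
          rw [Real.norm_eq_abs, abs_of_nonneg (sq_nonneg _), sq_abs]
      _ ≤ (2 * |S ω| + |H ω| + |c|) ^ 2 := by
          exact pow_le_pow_left₀ (abs_nonneg _) ((negp_abs_le (X ρ ω - c)).trans h1) 2
  have hmeas : ∀ (c ρ : ℝ), AEStronglyMeasurable (fun ω => negp (X ρ ω - c) ^ 2) P := by
    intro c ρ
    exact ((continuous_negp.measurable.comp ((hXm ρ).sub measurable_const)).pow_const
      2).aestronglyMeasurable
  have hIntNeg : ∀ (c ρ : ℝ), |ρ| ≤ 2 → Integrable (fun ω => negp (X ρ ω - c) ^ 2) P := by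
    intro c ρ hρ
    exact (hBint c).mono' (hmeas c ρ) (ae_of_all _ (hbd c ρ hρ))
  -- continuity in ρ of the integral
  have hcont : ∀ c : ℝ, ContinuousOn (fun ρ => ∫ ω, negp (X ρ ω - c) ^ 2 ∂P)
      (Icc (-1 : ℝ) 1) := by
    intro c
    intro ρ₀ hρ₀
    refine ContinuousAt.continuousWithinAt ?_
    have hev : ∀ᶠ ρ in nhds ρ₀, ρ ∈ Ioo (-2 : ℝ) 2 := by
      refine Ioo_mem_nhds ?_ ?_
      · linarith [hρ₀.1]
      · linarith [hρ₀.2]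
    refine continuousAt_of_dominated (F := fun ρ ω => negp (X ρ ω - c) ^ 2)
      (bound := fun ω => (2 * |S ω| + |H ω| + |c|) ^ 2)
      (Eventually.of_forall fun ρ => hmeas c ρ) ?_ (hBint c) ?_
    · filter_upwards [hev] with ρ hρ
      exact ae_of_all _ (hbd c ρ (by rw [abs_le]; constructor <;> linarith [hρ.1, hρ.2]))
    · refine ae_of_all _ fun ω => ?_
      have : Continuous fun ρ => negp (X ρ ω - c) ^ 2 := by
        refine (continuous_negp.comp ?_).pow 2
        exact ((continuous_id.mul continuous_const).add
          (((Real.continuous_sqrt.comp (by fun_prop))).mul continuous_const)).sub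
            continuous_const
      exact this.continuousAt
  -- φ c ρ is the objective with threshold c
  set φ : ℝ → ℝ → ℝ := fun c ρ => (∫ ω, negp (X ρ ω - c) ^ 2 ∂P) - (1 - ρ ^ 2) * κ with hφ
  have hφcont : ∀ c : ℝ, ContinuousOn (φ c) (Icc (-1 : ℝ) 1) :=
    fun c => (hcont c).sub (Continuous.continuousOn (by fun_prop))
  -- minimum attained
  have hattain : ∀ c : ℝ, ∃ ρm ∈ Icc (-1 : ℝ) 1,
      (∀ ρ ∈ Icc (-1 : ℝ) 1, φ c ρm ≤ φ c ρ) ∧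
      (⨅ ρ : Icc (-1 : ℝ) 1, φ c ρ) = φ c ρm := by
    intro c
    obtain ⟨ρm, hmem, hmin⟩ := isCompact_Icc.exists_isMinOn (⟨0, by norm_num⟩ :
      (Icc (-1 : ℝ) 1).Nonempty) (hφcont c)
    have hmin' : ∀ ρ ∈ Icc (-1 : ℝ) 1, φ c ρm ≤ φ c ρ := fun ρ hρ => hmin hρ
    have hbdd : BddBelow (Set.range fun ρ : Icc (-1 : ℝ) 1 => φ c ρ) := by
      refine ⟨φ c ρm, ?_⟩
      rintro x ⟨ρ, rfl⟩
      exact hmin' ρ ρ.2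
    refine ⟨ρm, hmem, hmin', le_antisymm ?_ ?_⟩
    · exact ciInf_le hbdd (⟨ρm, hmem⟩ : Icc (-1 : ℝ) 1)
    · exact le_ciInf fun ρ => hmin' ρ ρ.2
  -- strict monotonicity in c of the integral
  have hstrict : ∀ (c₁ c₂ ρ : ℝ), 0 < c₂ → c₂ < c₁ → ρ ∈ Icc (-1 : ℝ) 1 →
      (∫ ω, negp (X ρ ω - c₂) ^ 2 ∂P) < ∫ ω, negp (X ρ ω - c₁) ^ 2 ∂P := by
    intro c₁ c₂ ρ hc₂ hcc hρ
    have hρ2 : |ρ| ≤ 2 := by rw [abs_le]; exact ⟨by linarith [hρ.1], by linarith [hρ.2]⟩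
    set d : Ω → ℝ := fun ω => negp (X ρ ω - c₁) ^ 2 - negp (X ρ ω - c₂) ^ 2 with hd
    have hdnonneg : ∀ ω, 0 ≤ d ω := by
      intro ω
      have h1 : negp (X ρ ω - c₁) ≤ negp (X ρ ω - c₂) :=
        min_le_min (by linarith) le_rfl
      have h2 : negp (X ρ ω - c₂) ≤ 0 := negp_nonpos _
      have := sq_le_sq' (a := negp (X ρ ω - c₂)) (b := -(negp (X ρ ω - c₁)))
        (by linarith) (by linarith)
      rw [neg_pow] at this
      simp only [hd]
      nlinarith [this]
    have hdint : Integrable d P := (hIntNeg c₁ ρ hρ2).sub (hIntNeg c₂ ρ hρ2)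
    have hdpos : 0 < ∫ ω, d ω ∂P := by
      rw [integral_pos_iff_support_of_nonneg hdnonneg hdint]
      set A : Set Ω := (S ⁻¹' Ioo (-(c₁/2)) (c₁/2)) ∩ (H ⁻¹' Ioo (-(c₁/2)) (c₁/2)) with hA
      have hsub : A ⊆ Function.support d := by
        intro ω hω
        have hSb : |S ω| < c₁ / 2 := abs_lt.mpr ⟨hω.1.1, hω.1.2⟩
        have hHb : |H ω| < c₁ / 2 := abs_lt.mpr ⟨hω.2.1, hω.2.2⟩
        have hXb : |X ρ ω| < c₁ := by
          have h1 : |X ρ ω| ≤ |ρ| * |S ω| + Real.sqrt (1 - ρ ^ 2) * |H ω| := by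
            calc |X ρ ω| ≤ |ρ * S ω| + |Real.sqrt (1 - ρ ^ 2) * H ω| := abs_add_le _ _
              _ = |ρ| * |S ω| + Real.sqrt (1 - ρ ^ 2) * |H ω| := by
                rw [abs_mul, abs_mul, abs_of_nonneg (Real.sqrt_nonneg _)]
          have h2 : |ρ| * |S ω| ≤ 1 * |S ω| :=
            mul_le_mul_of_nonneg_right (abs_le.mpr ⟨hρ.1, hρ.2⟩) (abs_nonneg _)
          have h3 : Real.sqrt (1 - ρ ^ 2) * |H ω| ≤ 1 * |H ω| :=
            mul_le_mul_of_nonneg_right (hsqrt_le ρ) (abs_nonneg _)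
          linarith
        have hu : X ρ ω - c₁ < 0 := by
          have := (abs_lt.mp hXb).2; linarith
        have hnegp1 : negp (X ρ ω - c₁) = X ρ ω - c₁ := min_eq_left hu.le
        have hv : X ρ ω - c₁ < negp (X ρ ω - c₂) := lt_min (by linarith) hu
        have hv0 : negp (X ρ ω - c₂) ≤ 0 := negp_nonpos _
        have hsq : negp (X ρ ω - c₂) ^ 2 < (X ρ ω - c₁) ^ 2 := by
          have := sq_lt_sq' (a := negp (X ρ ω - c₂)) (b := -(X ρ ω - c₁))
            (by linarith) (by linarith)
          rw [neg_pow] at this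
          nlinarith [this]
        intro hcon
        simp only [hd] at hcon
        rw [hnegp1] at hcon
        nlinarith [hcon, hsq]
      refine lt_of_lt_of_le ?_ (measure_mono hsub)
      rw [hA, hindep.measure_inter_preimage_eq_mul _ _ measurableSet_Ioo measurableSet_Ioo]
      have hSset : S ⁻¹' Ioo (-(c₁/2)) (c₁/2) = G ⁻¹' Ioo (-(c₁/2)) (c₁/2) := by
        ext ω
        simp only [mem_preimage, mem_Ioo, ← abs_lt, hSabs ω]
      have hc1 : -(c₁/2) < c₁/2 := by linarith
      have hGp : 0 < P (G ⁻¹' Ioo (-(c₁/2)) (c₁/2)) := by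
        have := stdGaussian_Ioo_pos hc1
        rwa [← hG, Measure.map_apply hGm measurableSet_Ioo] at this
      have hHp : 0 < P (H ⁻¹' Ioo (-(c₁/2)) (c₁/2)) := by
        have := stdGaussian_Ioo_pos hc1
        rwa [← hH, Measure.map_apply hHm measurableSet_Ioo] at this
      rw [hSset]
      exact ENNReal.mul_pos hGp.ne' hHp.ne'
    have := integral_sub (hIntNeg c₁ ρ hρ2) (hIntNeg c₂ ρ hρ2)
    rw [hd] at hdpos
    rw [this] at hdpos
    linarith
  -- conclude
  intro q₁ hq₁ q₂ hq₂ h12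
  show (⨅ ρ : Icc (-1 : ℝ) 1, φ (1 / q₂) ρ) < ⨅ ρ : Icc (-1 : ℝ) 1, φ (1 / q₁) ρ
  obtain ⟨ρ₁, hρ₁mem, hρ₁min, hinf₁⟩ := hattain (1 / q₁)
  obtain ⟨ρ₂, hρ₂mem, hρ₂min, hinf₂⟩ := hattain (1 / q₂)
  have hq₂' : 0 < q₂ := hq₂
  have hc2pos : 0 < 1 / q₂ := by positivity
  have hcc : 1 / q₂ < 1 / q₁ := one_div_lt_one_div_of_lt hq₁ h12
  calc (⨅ ρ : Icc (-1 : ℝ) 1, φ (1 / q₂) ρ) = φ (1 / q₂) ρ₂ := hinf₂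
    _ ≤ φ (1 / q₂) ρ₁ := hρ₂min ρ₁ hρ₁mem
    _ < φ (1 / q₁) ρ₁ := by
        simp only [hφ]
        have := hstrict (1 / q₁) (1 / q₂) ρ₁ hc2pos hcc hρ₁mem
        linarith
    _ = ⨅ ρ : Icc (-1 : ℝ) 1, φ (1 / q₁) ρ := hinf₁.symm
end

section
/- Let ℓ(t) = log(1 + e^{−t}) be the logistic loss and λ > 0. Let H be standard Gaussian, and X = GY with G standard Gaussian independent of H and Y ∈ {±1} a label so that (H, X) has a strictly positive joint density on ℝ². Fix pairs (α₁, Υ₁) ≠ (α₂, Υ₂) with α₁, α₂ > 0, and write P_i(h, x) = prox_{α_i ℓ(·/α_i)}(h + Υ_i x; λ) for i = 1, 2. Then there exists a ball S ⊂ ℝ² with P((H, X) ∈ S) > 0 on which P₁(h, x)/α₁ ≠ P₂(h, x)/α₂ for all (h, x) ∈ S; consequently, for every θ ∈ (0, 1) with θ̄ = 1 − θ, the strict inequality E[ℓ(θ P₁(H,X)/α₁ + θ̄ P₂(H,X)/α₂)] < θ E[ℓ(P₁(H,X)/α₁)] + θ̄ E[ℓ(P₂(H,X)/α₂)] holds.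 -/
open MeasureTheory ProbabilityTheory Filter Set

/-- The logistic loss `ℓ(t) = log(1 + e^{−t})`. -/
noncomputable def logisticLoss (t : ℝ) : ℝ := Real.log (1 + Real.exp (-t))

/-- `v` is the proximal point `prox_g(x; λ)`, i.e. the minimizer of
`v ↦ (1/(2λ))(x − v)² + g(v)`. -/
def IsProxOf (g : ℝ → ℝ) (lam x v : ℝ) : Prop :=
  ∀ w : ℝ, (1 / (2 * lam)) * (x - v) ^ 2 + g v ≤ (1 / (2 * lam)) * (x - w) ^ 2 + g w

open scoped ENNReal NNReal

lemma continuous_logisticLoss : Continuous logisticLoss :=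
  Continuous.log (continuous_const.add (Real.continuous_exp.comp continuous_neg))
    (fun t => by positivity)

lemma hasDerivAt_logisticLoss (t : ℝ) :
    HasDerivAt logisticLoss (-(1 + Real.exp t)⁻¹) t := by
  have h1 : HasDerivAt (fun s : ℝ => 1 + Real.exp (-s)) (-Real.exp (-t)) t := by
    have := ((Real.hasDerivAt_exp (-t)).comp t ((hasDerivAt_id t).neg)).const_add 1
    simpa using this
  have h2 := (Real.hasDerivAt_log (by positivity : (1:ℝ) + Real.exp (-t) ≠ 0)).comp t h1
  have : HasDerivAt (fun s : ℝ => Real.log (1 + Real.exp (-s)))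
      ((1 + Real.exp (-t))⁻¹ * (-Real.exp (-t))) t := h2
  convert this using 1
  · rfl
  have he := Real.exp_ne_zero t
  rw [Real.exp_neg]
  field_simp
  ring

lemma deriv_logisticLoss : deriv logisticLoss = fun t => -(1 + Real.exp t)⁻¹ :=
  funext fun t => (hasDerivAt_logisticLoss t).deriv

lemma strictConvexOn_logisticLoss : StrictConvexOn ℝ univ logisticLoss := by
  refine StrictMonoOn.strictConvexOn_of_deriv convex_univ
    continuous_logisticLoss.continuousOn ?_
  rw [interior_univ]
  intro a _ b _ hab
  rw [deriv_logisticLoss]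
  have h1 : (0:ℝ) < 1 + Real.exp a := by positivity
  have h2 : Real.exp a < Real.exp b := Real.exp_lt_exp.2 hab
  have : (1 + Real.exp b)⁻¹ < (1 + Real.exp a)⁻¹ := by
    apply inv_strictAnti₀ h1; linarith
  simpa using this

lemma logisticLoss_nonneg (t : ℝ) : 0 ≤ logisticLoss t :=
  Real.log_nonneg (by have := Real.exp_nonneg (-t); linarith)

lemma logisticLoss_le (t : ℝ) : logisticLoss t ≤ Real.log 2 + |t| := by
  unfold logisticLoss
  rcases le_or_gt 0 t with ht | ht
  · have h1 : Real.exp (-t) ≤ 1 := Real.exp_le_one_iff.2 (by linarith)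
    have := Real.log_le_log (by positivity) (by linarith : (1:ℝ) + Real.exp (-t) ≤ 2)
    have := abs_nonneg t
    linarith
  · have h1 : (1:ℝ) ≤ Real.exp (-t) := Real.one_le_exp (by linarith)
    have h2 : (1:ℝ) + Real.exp (-t) ≤ 2 * Real.exp (-t) := by linarith
    have h3 := Real.log_le_log (by positivity) h2
    rw [Real.log_mul (by norm_num) (Real.exp_ne_zero _), Real.log_exp] at h3
    rw [abs_of_neg ht]
    linarith

/-- first-order condition for the prox of `v ↦ α ℓ(v/α)`. -/
lemma prox_foc {α lam x v : ℝ} (hα : 0 < α) (hlam : 0 < lam)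
    (h : IsProxOf (fun v => α * logisticLoss (v / α)) lam x v) :
    v - lam * (1 + Real.exp (v / α))⁻¹ = x := by
  have hloc : IsLocalMin (fun w => (1 / (2 * lam)) * (x - w) ^ 2
      + α * logisticLoss (w / α)) v := Filter.Eventually.of_forall h
  have hsq : HasDerivAt (fun w : ℝ => (1 / (2 * lam)) * (x - w) ^ 2) ((v - x) / lam) v := by
    have h := (((hasDerivAt_id v).const_sub x).pow 2).const_mul (1 / (2 * lam))
    refine h.congr_deriv ?_
    simp only [id_eq]
    field_simp
    ring
  have hg : HasDerivAt (fun w : ℝ => α * logisticLoss (w / α))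
      (-(1 + Real.exp (v / α))⁻¹) v := by
    have hinner : HasDerivAt (fun w : ℝ => w / α) (1 / α) v := by
      simpa using (hasDerivAt_id v).div_const α
    have h := ((hasDerivAt_logisticLoss (v / α)).comp v hinner).const_mul α
    refine h.congr_deriv ?_
    field_simp
  have hzero := hloc.hasDerivAt_eq_zero (hsq.add hg)
  have hp : (0:ℝ) < 1 + Real.exp (v / α) := by positivity
  -- hzero : (v - x) * (1 + rexp (v / α)) + -lam = 0
  field_simp at hzero ⊢
  nlinarith [hzero]

lemma prox_loss_le {α lam z v : ℝ} (hα : 0 < α) (hlam : 0 < lam)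
    (h : IsProxOf (fun v => α * logisticLoss (v / α)) lam z v) :
    logisticLoss (v / α) ≤ logisticLoss (z / α) := by
  have h2 := h z
  have h3 : (0:ℝ) ≤ (1 / (2 * lam)) * (z - v) ^ 2 := by positivity
  simp only [sub_self] at h2
  nlinarith

/-- `F α v = v - λ(1+e^{v/α})⁻¹` is strictly monotone. -/
lemma strictMono_F {α lam : ℝ} (hα : 0 < α) (hlam : 0 < lam) :
    StrictMono (fun v : ℝ => v - lam * (1 + Real.exp (v / α))⁻¹) := by
  intro a b hab
  have h1 : (1 + Real.exp (b / α))⁻¹ ≤ (1 + Real.exp (a / α))⁻¹ := by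
    apply inv_anti₀ (by positivity)
    have : Real.exp (a / α) ≤ Real.exp (b / α) :=
      Real.exp_le_exp.2 (by gcongr)
    linarith
  have h2 : lam * (1 + Real.exp (b / α))⁻¹ ≤ lam * (1 + Real.exp (a / α))⁻¹ :=
    mul_le_mul_of_nonneg_left h1 hlam.le
  simp only
  linarith

lemma stdGaussian_singleton (a : ℝ) : _root_.stdGaussian {a} = 0 := by
  rw [_root_.stdGaussian]
  exact gaussianReal_absolutelyContinuous 0 one_ne_zero (Real.volume_singleton)

lemma integrable_id_stdGaussian : Integrable (fun x : ℝ => x) _root_.stdGaussian := by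
  rw [_root_.stdGaussian, gaussianReal_of_var_ne_zero 0 one_ne_zero]
  refine ⟨measurable_id.aestronglyMeasurable, ?_⟩
  rw [hasFiniteIntegral_def]
  rw [lintegral_withDensity_eq_lintegral_mul _ (measurable_gaussianPDF 0 1)
    measurable_enorm]
  have hint : Integrable (fun x : ℝ => 2 * Real.exp (-(4:ℝ)⁻¹ * x ^ 2)) volume :=
    (integrable_exp_neg_mul_sq (by norm_num : (0:ℝ) < 4⁻¹)).const_mul 2
  refine lt_of_le_of_lt (lintegral_mono fun x => ?_) hint.lintegral_lt_top
  show gaussianPDF 0 1 x * ‖x‖ₑ ≤ ENNReal.ofReal (2 * Real.exp (-(4:ℝ)⁻¹ * x ^ 2))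
  rw [gaussianPDF_def, ← ofReal_norm,
    ← ENNReal.ofReal_mul (gaussianPDFReal_nonneg 0 1 x)]
  apply ENNReal.ofReal_le_ofReal
  have hpdf : gaussianPDFReal 0 1 x ≤ Real.exp (-x ^ 2 / 2) := by
    rw [gaussianPDFReal]
    have h1 : (1:ℝ) ≤ Real.sqrt (2 * Real.pi * ((1:ℝ≥0):ℝ)) := by
      refine Real.one_le_sqrt.2 ?_
      push_cast
      nlinarith [Real.pi_gt_three]
    have h2 : (Real.sqrt (2 * Real.pi * ((1:ℝ≥0):ℝ)))⁻¹ ≤ 1 := by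
      apply inv_le_one_of_one_le₀ h1
    calc (Real.sqrt (2 * Real.pi * ((1:ℝ≥0):ℝ)))⁻¹ * Real.exp (-(x - 0) ^ 2 / (2 * ((1:ℝ≥0):ℝ)))
        ≤ 1 * Real.exp (-(x - 0) ^ 2 / (2 * ((1:ℝ≥0):ℝ))) := by
          apply mul_le_mul_of_nonneg_right h2 (Real.exp_nonneg _)
      _ = Real.exp (-x ^ 2 / 2) := by norm_num
  have hnorm : ‖x‖ = |x| := Real.norm_eq_abs x
  have habs : |x| ≤ 2 * Real.exp ((4:ℝ)⁻¹ * x ^ 2) := by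
    have h3 : (1:ℝ) + (4:ℝ)⁻¹ * x ^ 2 ≤ Real.exp ((4:ℝ)⁻¹ * x ^ 2) :=
      Real.add_one_le_exp _ |>.trans_eq' (by ring)
    nlinarith [sq_nonneg (|x| - 2), sq_abs x]
  calc gaussianPDFReal 0 1 x * ‖x‖
      ≤ Real.exp (-x ^ 2 / 2) * (2 * Real.exp ((4:ℝ)⁻¹ * x ^ 2)) := by
        rw [hnorm]
        apply mul_le_mul hpdf habs (abs_nonneg x) (Real.exp_nonneg _)
    _ = 2 * Real.exp (-x ^ 2 / 2 + (4:ℝ)⁻¹ * x ^ 2) := by rw [Real.exp_add]; ring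
    _ = 2 * Real.exp (-(4:ℝ)⁻¹ * x ^ 2) := by ring_nf

lemma graph_null {Ω : Type*} [MeasurableSpace Ω] (P : Measure Ω) [IsProbabilityMeasure P]
    (H G : Ω → ℝ) (hHm : Measurable H) (hGm : Measurable G)
    (hH : Measure.map H P = _root_.stdGaussian) (hindep : IndepFun G H P)
    (f : ℝ → ℝ) (hf : Measurable f) : P {ω | H ω = f (G ω)} = 0 := by
  have hmap : Measure.map (fun ω => (G ω, H ω)) P
      = (Measure.map G P).prod (Measure.map H P) :=
    (indepFun_iff_map_prod_eq_prod_map_map hGm.aemeasurable hHm.aemeasurable).mp hindep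
  have hS : MeasurableSet {p : ℝ × ℝ | p.2 = f p.1} :=
    measurableSet_eq_fun measurable_snd (hf.comp measurable_fst)
  have heq : {ω | H ω = f (G ω)}
      = (fun ω => (G ω, H ω)) ⁻¹' {p : ℝ × ℝ | p.2 = f p.1} := rfl
  rw [heq, ← Measure.map_apply (hGm.prodMk hHm) hS, hmap, Measure.prod_apply hS]
  have hfib : ∀ x : ℝ, (Measure.map H P) (Prod.mk x ⁻¹' {p : ℝ × ℝ | p.2 = f p.1}) = 0 := by
    intro x
    have : Prod.mk x ⁻¹' {p : ℝ × ℝ | p.2 = f p.1} = {f x} := by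
      ext y; simp [Set.mem_preimage, Set.mem_singleton_iff]
    rw [this, hH]
    exact stdGaussian_singleton _
  have hfib' : ∀ x : ℝ, (Measure.map H P) {f x} = (0:ℝ≥0∞) := by
    intro x; rw [hH]; exact stdGaussian_singleton _
  simp [hfib, hfib']

lemma exists_ball_pos {Ω : Type*} [MeasurableSpace Ω] (P : Measure Ω) [IsProbabilityMeasure P]
    (T : Ω → ℝ × ℝ) (hT : Measurable T) (C : Set (ℝ × ℝ)) (hC : IsClosed C)
    (hnull : P (T ⁻¹' C) = 0) :
    ∃ c : ℝ × ℝ, ∃ rad : ℝ, 0 < rad ∧ 0 < P (T ⁻¹' Metric.ball c rad) ∧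
      Metric.ball c rad ⊆ Cᶜ := by
  obtain ⟨D, hDc, hDd⟩ := TopologicalSpace.exists_countable_dense (ℝ × ℝ)
  by_contra hcon
  push_neg at hcon
  set J : Set ((ℝ × ℝ) × ℚ) :=
    {p | p.1 ∈ D ∧ 0 < ((p.2 : ℝ)) ∧ Metric.ball p.1 (p.2 : ℝ) ⊆ Cᶜ} with hJ
  have hJc : J.Countable := (hDc.prod Set.countable_univ).mono (fun p hp => Set.mem_prod.mpr ⟨hp.1, Set.mem_univ _⟩)
  have hcover : Cᶜ ⊆ ⋃ p ∈ J, Metric.ball p.1 (p.2 : ℝ) := by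
    intro z hz
    obtain ⟨ε, hε, hball⟩ := Metric.isOpen_iff.mp hC.isOpen_compl z hz
    obtain ⟨d, hd, hdz⟩ := hDd.exists_dist_lt z (by positivity : 0 < ε / 3)
    obtain ⟨q, hq1, hq2⟩ := exists_rat_btwn (by linarith : ε / 3 < ε / 2)
    have hq0 : 0 < (q : ℝ) := lt_trans (by positivity) hq1
    have hsub : Metric.ball d (q : ℝ) ⊆ Metric.ball z ε := by
      intro w hw
      rw [Metric.mem_ball] at hw ⊢
      have h1 := dist_triangle w d z
      have h2 : dist d z < ε / 3 := by rw [dist_comm]; exact hdz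
      linarith
    refine Set.mem_biUnion (show (d, q) ∈ J from ⟨hd, hq0, hsub.trans hball⟩) ?_
    rw [Metric.mem_ball]
    calc dist z d < ε / 3 := hdz
      _ < (q : ℝ) := hq1
  have hzero : ∀ p ∈ J, P (T ⁻¹' Metric.ball p.1 (p.2 : ℝ)) = 0 := by
    intro p hp
    have := hcon p.1 (p.2 : ℝ) hp.2.1
    by_contra hne
    exact this (pos_iff_ne_zero.mpr hne) hp.2.2
  have hone : P (T ⁻¹' Cᶜ) = 1 := by
    have hmeas : MeasurableSet (T ⁻¹' C) := hT hC.measurableSet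
    rw [Set.preimage_compl, measure_compl hmeas (measure_ne_top P _), hnull,
      measure_univ, tsub_zero]
  have : P (T ⁻¹' Cᶜ) = 0 := by
    apply measure_mono_null (Set.preimage_mono hcover)
    rw [Set.preimage_iUnion₂]
    exact (measure_biUnion_null_iff hJc).mpr hzero
  rw [hone] at this
  exact one_ne_zero this

lemma strict_jensen_aux {Ω : Type*} [MeasurableSpace Ω] (P : Measure Ω) [IsProbabilityMeasure P]
    (A B : Ω → ℝ) (hAm : Measurable A) (hBm : Measurable B)
    (hLA : Integrable (fun ω => logisticLoss (A ω)) P)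
    (hLB : Integrable (fun ω => logisticLoss (B ω)) P)
    (E : Set Ω) (hE : 0 < P E) (hAB : ∀ ω ∈ E, A ω ≠ B ω)
    (θ : ℝ) (hθ : θ ∈ Set.Ioo (0 : ℝ) 1) :
    (∫ ω, logisticLoss (θ * A ω + (1 - θ) * B ω) ∂P)
      < θ * (∫ ω, logisticLoss (A ω) ∂P) + (1 - θ) * (∫ ω, logisticLoss (B ω) ∂P) := by
  obtain ⟨hθ0, hθ1⟩ := hθ
  have hθ1' : (0:ℝ) < 1 - θ := by linarith
  have hcvx := strictConvexOn_logisticLoss.convexOn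
  have hconv : ∀ ω, logisticLoss (θ * A ω + (1 - θ) * B ω)
      ≤ θ * logisticLoss (A ω) + (1 - θ) * logisticLoss (B ω) := by
    intro ω
    have := hcvx.2 (Set.mem_univ (A ω)) (Set.mem_univ (B ω)) hθ0.le hθ1'.le
      (by ring : θ + (1 - θ) = 1)
    simpa using this
  have hsum : Integrable (fun ω => θ * logisticLoss (A ω) + (1 - θ) * logisticLoss (B ω)) P :=
    (hLA.const_mul θ).add (hLB.const_mul (1 - θ))
  have hmix : Integrable (fun ω => logisticLoss (θ * A ω + (1 - θ) * B ω)) P := by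
    refine Integrable.mono' hsum
      (continuous_logisticLoss.measurable.comp
        ((measurable_const.mul hAm).add (measurable_const.mul hBm))).aestronglyMeasurable
      (ae_of_all _ fun ω => ?_)
    rw [Real.norm_eq_abs, abs_of_nonneg (logisticLoss_nonneg _)]
    exact hconv ω
  set g : Ω → ℝ := fun ω => θ * logisticLoss (A ω) + (1 - θ) * logisticLoss (B ω)
    - logisticLoss (θ * A ω + (1 - θ) * B ω) with hg
  have hgint : Integrable g P := hsum.sub hmix
  have hgnn : ∀ ω, 0 ≤ g ω := fun ω => by have := hconv ω; simp only [hg]; linarith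
  have hgpos : ∀ ω ∈ E, 0 < g ω := by
    intro ω hω
    have := strictConvexOn_logisticLoss.2 (Set.mem_univ (A ω)) (Set.mem_univ (B ω))
      (hAB ω hω) hθ0 hθ1' (by ring : θ + (1 - θ) = 1)
    simp only [smul_eq_mul] at this
    simp only [hg]
    linarith
  have hgI : 0 < ∫ ω, g ω ∂P := by
    rw [integral_pos_iff_support_of_nonneg_ae (ae_of_all _ hgnn) hgint]
    exact lt_of_lt_of_le hE (measure_mono fun ω hω => (hgpos ω hω).ne')
  have hsplit : ∫ ω, g ω ∂P
      = θ * (∫ ω, logisticLoss (A ω) ∂P) + (1 - θ) * (∫ ω, logisticLoss (B ω) ∂P)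
        - ∫ ω, logisticLoss (θ * A ω + (1 - θ) * B ω) ∂P := by
    have h1 : (∫ ω, (θ * logisticLoss (A ω) + (1 - θ) * logisticLoss (B ω)) ∂P)
        = θ * (∫ ω, logisticLoss (A ω) ∂P) + (1 - θ) * (∫ ω, logisticLoss (B ω) ∂P) := by
      rw [integral_add (hLA.const_mul θ) (hLB.const_mul (1 - θ)), integral_const_mul,
        integral_const_mul]
    simp only [hg]
    rw [integral_sub hsum hmix, h1]
  rw [hsplit] at hgI
  linarith

/-- for `(α₁, Υ₁) ≠ (α₂, Υ₂)`, `H` standard Gaussian and `X = GY` (with `G`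
standard Gaussian independent of `H`, `Y ∈ {±1}`) such that `(H, X)` has a strictly positive
joint density on `ℝ²`, there is a ball `S ⊆ ℝ²` of positive probability on which
`P₁(h,x)/α₁ ≠ P₂(h,x)/α₂`; consequently the strict Jensen inequality
`E[ℓ(θP₁/α₁ + (1−θ)P₂/α₂)] < θE[ℓ(P₁/α₁)] + (1−θ)E[ℓ(P₂/α₂)]` holds for all `θ ∈ (0,1)`,
where `Pᵢ = Pᵢ(H, X) = prox_{αᵢℓ(·/αᵢ)}(H + Υᵢ X; λ)`. -/
theorem prox_logistic_strict_jensen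
    {Ω : Type*} [MeasurableSpace Ω] (P : Measure Ω) [IsProbabilityMeasure P]
    (H G Y : Ω → ℝ)
    (hHm : Measurable H) (hGm : Measurable G) (hYm : Measurable Y)
    (hY : ∀ ω, Y ω = 1 ∨ Y ω = -1)
    (hH : Measure.map H P = _root_.stdGaussian) (hG : Measure.map G P = _root_.stdGaussian)
    (hindep : IndepFun G H P)
    (X : Ω → ℝ) (hX : X = fun ω => G ω * Y ω)
    (dens : ℝ × ℝ → ℝ) (hdens : ∀ z, 0 < dens z)
    (hjoint : Measure.map (fun ω => (H ω, X ω)) P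
      = (volume : Measure (ℝ × ℝ)).withDensity fun z => ENNReal.ofReal (dens z))
    (lam α₁ α₂ Υ₁ Υ₂ : ℝ) (hlam : 0 < lam) (hα₁ : 0 < α₁) (hα₂ : 0 < α₂)
    (hne : (α₁, Υ₁) ≠ (α₂, Υ₂))
    (P₁ P₂ : ℝ → ℝ)
    (hP₁ : ∀ z : ℝ, IsProxOf (fun v => α₁ * logisticLoss (v / α₁)) lam z (P₁ z))
    (hP₂ : ∀ z : ℝ, IsProxOf (fun v => α₂ * logisticLoss (v / α₂)) lam z (P₂ z)) :
    (∃ c : ℝ × ℝ, ∃ rad : ℝ, 0 < rad ∧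
      0 < P {ω | (H ω, X ω) ∈ Metric.ball c rad} ∧
      ∀ z ∈ Metric.ball c rad,
        P₁ (z.1 + Υ₁ * z.2) / α₁ ≠ P₂ (z.1 + Υ₂ * z.2) / α₂) ∧
    ∀ θ : ℝ, θ ∈ Set.Ioo (0 : ℝ) 1 →
      (∫ ω, logisticLoss (θ * (P₁ (H ω + Υ₁ * X ω) / α₁)
          + (1 - θ) * (P₂ (H ω + Υ₂ * X ω) / α₂)) ∂P)
        < θ * (∫ ω, logisticLoss (P₁ (H ω + Υ₁ * X ω) / α₁) ∂P)
          + (1 - θ) * (∫ ω, logisticLoss (P₂ (H ω + Υ₂ * X ω) / α₂) ∂P) := by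
  have hXm : Measurable X := by rw [hX]; exact hGm.mul hYm
  have hTm : Measurable (fun ω => (H ω, X ω)) := hHm.prodMk hXm
  have hYne : ∀ ω, Y ω ≠ 0 := fun ω => by rcases hY ω with h | h <;> rw [h] <;> norm_num
  have hF₁ : ∀ z, P₁ z - lam * (1 + Real.exp (P₁ z / α₁))⁻¹ = z :=
    fun z => prox_foc hα₁ hlam (hP₁ z)
  have hF₂ : ∀ z, P₂ z - lam * (1 + Real.exp (P₂ z / α₂))⁻¹ = z :=
    fun z => prox_foc hα₂ hlam (hP₂ z)
  have hmono : ∀ (α : ℝ), 0 < α → ∀ (Q : ℝ → ℝ),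
      (∀ z, Q z - lam * (1 + Real.exp (Q z / α))⁻¹ = z) → Monotone Q := by
    intro α hα Q hQ a b hab
    by_contra hc
    push_neg at hc
    have h2 := strictMono_F hα hlam hc
    simp only at h2
    rw [hQ a, hQ b] at h2
    exact absurd h2 (not_lt.mpr hab)
  have hP₁m : Measurable P₁ := (hmono α₁ hα₁ P₁ hF₁).measurable
  have hP₂m : Measurable P₂ := (hmono α₂ hα₂ P₂ hF₂).measurable
  -- consequence of equality of the two normalized prox values
  have hkey : ∀ h x : ℝ, P₁ (h + Υ₁ * x) / α₁ = P₂ (h + Υ₂ * x) / α₂ →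
      ∃ t : ℝ, h + Υ₁ * x = α₁ * t - lam * (1 + Real.exp t)⁻¹ ∧
               h + Υ₂ * x = α₂ * t - lam * (1 + Real.exp t)⁻¹ := by
    intro h x heq
    set z₁ := h + Υ₁ * x with hz₁
    set z₂ := h + Υ₂ * x with hz₂
    refine ⟨P₁ z₁ / α₁, ?_, ?_⟩
    · have h1 : α₁ * (P₁ z₁ / α₁) = P₁ z₁ := by field_simp
      rw [h1]
      have e1 := hF₁ z₁
      linarith [e1]
    · have h1 : α₂ * (P₁ z₁ / α₁) = P₂ z₂ := by rw [heq]; field_simp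
      rw [h1]
      have e2 := hF₂ z₂
      rw [← heq] at e2
      linarith [e2]
  -- a closed null set containing all equality points
  have hGN : ∀ ψ : ℝ → ℝ, Measurable ψ → P {ω | H ω = ψ (X ω)} = 0 := by
    intro ψ hψ
    have h1 := graph_null P H G hHm hGm hH hindep ψ hψ
    have h2 := graph_null P H G hHm hGm hH hindep (fun g => ψ (-g)) (hψ.comp measurable_neg)
    refine measure_mono_null (fun ω hω => ?_) (measure_union_null h1 h2)
    simp only [Set.mem_setOf_eq] at hω
    rcases hY ω with hy | hy
    · left
      show H ω = ψ (G ω)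
      have hxg : X ω = G ω := by rw [hX]; simp [hy]
      rwa [hxg] at hω
    · right
      show H ω = ψ (-G ω)
      have hxg : X ω = -G ω := by rw [hX]; simp [hy]
      rwa [hxg] at hω
  have hCex : ∃ C : Set (ℝ × ℝ), IsClosed C ∧
      (∀ z : ℝ × ℝ, P₁ (z.1 + Υ₁ * z.2) / α₁ = P₂ (z.1 + Υ₂ * z.2) / α₂ → z ∈ C) ∧
      P ((fun ω => (H ω, X ω)) ⁻¹' C) = 0 := by
    by_cases huv : Υ₁ = Υ₂
    · have hαne : α₁ ≠ α₂ := fun hcontra => hne (by rw [hcontra, huv])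
      refine ⟨{z : ℝ × ℝ | z.1 = -lam / 2 - Υ₁ * z.2},
        isClosed_eq continuous_fst (by continuity), ?_, ?_⟩
      · intro z heq
        obtain ⟨t, e1, e2⟩ := hkey z.1 z.2 heq
        have ht : t = 0 := by
          have h3 : (α₁ - α₂) * t = 0 := by rw [huv] at e1; linear_combination e2 - e1
          rcases mul_eq_zero.mp h3 with h4 | h4
          · exact absurd (sub_eq_zero.mp h4) hαne
          · exact h4
        rw [ht] at e1
        simp only [Real.exp_zero, mul_zero] at e1
        show z.1 = -lam / 2 - Υ₁ * z.2
        norm_num at e1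
        linarith
      · exact hGN (fun x => -lam / 2 - Υ₁ * x)
          ((measurable_const.sub (measurable_const.mul measurable_id)))
    · by_cases hαe : α₁ = α₂
      · refine ⟨{z : ℝ × ℝ | z.2 = 0}, isClosed_eq continuous_snd continuous_const, ?_, ?_⟩
        · intro z heq
          obtain ⟨t, e1, e2⟩ := hkey z.1 z.2 heq
          have h3 : (Υ₁ - Υ₂) * z.2 = (α₁ - α₂) * t := by linear_combination e1 - e2
          rw [hαe, sub_self, zero_mul] at h3
          rcases mul_eq_zero.mp h3 with h4 | h4
          · exact absurd (sub_eq_zero.mp h4) huv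
          · exact h4
        · have hpre : (fun ω => (H ω, X ω)) ⁻¹' {z : ℝ × ℝ | z.2 = 0} = G ⁻¹' {0} := by
            ext ω
            simp only [Set.mem_preimage, Set.mem_setOf_eq, Set.mem_singleton_iff, hX]
            constructor
            · intro hxy
              rcases mul_eq_zero.mp hxy with h | h
              · exact h
              · exact absurd h (hYne ω)
            · intro hg; rw [hg, zero_mul]
          rw [hpre, ← Measure.map_apply hGm (measurableSet_singleton 0), hG]
          exact stdGaussian_singleton 0
      · set k : ℝ := (Υ₁ - Υ₂) / (α₁ - α₂) with hk
        set ψ : ℝ → ℝ :=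
          fun x => α₁ * (k * x) - lam * (1 + Real.exp (k * x))⁻¹ - Υ₁ * x with hψ
        have hψc : Continuous ψ := by
          apply Continuous.sub
          apply Continuous.sub
          · exact continuous_const.mul (continuous_const.mul continuous_id)
          · exact continuous_const.mul (Continuous.inv₀
              (continuous_const.add (Real.continuous_exp.comp
                (continuous_const.mul continuous_id))) (fun x => by positivity))
          · exact continuous_const.mul continuous_id
        refine ⟨{z : ℝ × ℝ | z.1 = ψ z.2},
          isClosed_eq continuous_fst (hψc.comp continuous_snd), ?_, hGN ψ hψc.measurable⟩
        intro z heq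
        obtain ⟨t, e1, e2⟩ := hkey z.1 z.2 heq
        have hαs : α₁ - α₂ ≠ 0 := sub_ne_zero.mpr hαe
        have ht : t = k * z.2 := by
          have h3 : (Υ₁ - Υ₂) * z.2 = (α₁ - α₂) * t := by linear_combination e1 - e2
          rw [hk]
          field_simp
          linarith [h3]
        show z.1 = ψ z.2
        rw [hψ]
        simp only
        rw [← ht]
        linarith [e1]
  obtain ⟨C, hCc, hCsub, hCnull⟩ := hCex
  obtain ⟨c, rad, hrad, hpos, hsub⟩ := exists_ball_pos P _ hTm C hCc hCnull
  have hballne : ∀ z ∈ Metric.ball c rad,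
      P₁ (z.1 + Υ₁ * z.2) / α₁ ≠ P₂ (z.1 + Υ₂ * z.2) / α₂ :=
    fun z hz heq => hsub hz (hCsub z heq)
  refine ⟨⟨c, rad, hrad, hpos, hballne⟩, ?_⟩
  intro θ hθ
  -- integrability of the two loss terms
  have hintH : Integrable H P := by
    have h0 : Integrable (fun x : ℝ => x) (Measure.map H P) := by
      rw [hH]; exact integrable_id_stdGaussian
    exact (integrable_map_measure measurable_id.aestronglyMeasurable hHm.aemeasurable).mp h0
  have hintG : Integrable G P := by
    have h0 : Integrable (fun x : ℝ => x) (Measure.map G P) := by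
      rw [hG]; exact integrable_id_stdGaussian
    exact (integrable_map_measure measurable_id.aestronglyMeasurable hGm.aemeasurable).mp h0
  have hXabs : ∀ ω, |X ω| = |G ω| := by
    intro ω
    rw [hX]
    rcases hY ω with h | h <;> simp [h, abs_mul]
  have hL : ∀ (α Υ : ℝ), 0 < α → ∀ (Q : ℝ → ℝ), Measurable Q →
      (∀ z : ℝ, IsProxOf (fun v => α * logisticLoss (v / α)) lam z (Q z)) →
      Integrable (fun ω => logisticLoss (Q (H ω + Υ * X ω) / α)) P := by
    intro α Υ hα Q hQm hQ
    have hb : Integrable (fun ω => Real.log 2 + (|H ω| + |Υ| * |G ω|) / α) P :=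
      (integrable_const (Real.log 2)).add ((hintH.abs.add (hintG.abs.const_mul |Υ|)).div_const α)
    refine Integrable.mono' hb ?_ (ae_of_all _ fun ω => ?_)
    · exact (continuous_logisticLoss.measurable.comp
        ((hQm.comp (hHm.add (measurable_const.mul hXm))).div_const α)).aestronglyMeasurable
    · rw [Real.norm_eq_abs, abs_of_nonneg (logisticLoss_nonneg _)]
      have h1 : logisticLoss (Q (H ω + Υ * X ω) / α)
          ≤ logisticLoss ((H ω + Υ * X ω) / α) := prox_loss_le hα hlam (hQ _)
      have h2 := logisticLoss_le ((H ω + Υ * X ω) / α)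
      have h3 : |(H ω + Υ * X ω) / α| ≤ (|H ω| + |Υ| * |G ω|) / α := by
        rw [abs_div, abs_of_pos hα]
        gcongr
        calc |H ω + Υ * X ω| ≤ |H ω| + |Υ * X ω| := abs_add_le _ _
          _ = |H ω| + |Υ| * |G ω| := by rw [abs_mul, hXabs]
      linarith
  have hLA := hL α₁ Υ₁ hα₁ P₁ hP₁m hP₁
  have hLB := hL α₂ Υ₂ hα₂ P₂ hP₂m hP₂
  exact strict_jensen_aux P (fun ω => P₁ (H ω + Υ₁ * X ω) / α₁)
    (fun ω => P₂ (H ω + Υ₂ * X ω) / α₂)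
    ((hP₁m.comp (hHm.add (measurable_const.mul hXm))).div_const α₁)
    ((hP₂m.comp (hHm.add (measurable_const.mul hXm))).div_const α₂)
    hLA hLB {ω | (H ω, X ω) ∈ Metric.ball c rad} hpos
    (fun ω hω => hballne (H ω, X ω) hω) θ hθ
end
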